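/- Second-order Taylor bound used in interval verification: if f : ℝ → ℝ is twice differentiable on [x₀ − h, x₀ + h] with |f''(t)| ≤ M for all t in that interval, and if f(x₀) + |f'(x₀)|·h + M·h²/2 < 0, then f(x) < 0 for all x ∈ [x₀ − h, x₀ + h]. -/

import Mathlib

open Set

private lemma taylor_helper
    (f f' f'' : ℝ → ℝ) (x₀ b M : ℝ)
    (hd1 : ∀ x ∈ Icc x₀ b, HasDerivAt f (f' x) x)
    (hd2 : ∀ x ∈ Icc x₀ b, HasDerivAt f' (f'' x) x)
    (hM : ∀ t ∈ Icc x₀ b, |f'' t| ≤ M) :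
    ∀ x ∈ Icc x₀ b, |f x - f x₀ - f' x₀ * (x - x₀)| ≤ M * (x - x₀) ^ 2 / 2 := by
  set g : ℝ → ℝ := fun t => f t - f x₀ - f' x₀ * (t - x₀) with hg
  have hg' : ∀ x ∈ Icc x₀ b, HasDerivAt g (f' x - f' x₀) x := by
    intro x hx
    have : HasDerivAt (fun t : ℝ => f t - f x₀ - f' x₀ * (t - x₀))
        (f' x - f' x₀ * 1) x :=
      (((hd1 x hx).sub_const _).sub
        ((((hasDerivAt_id x).sub_const x₀).const_mul (f' x₀))))
    simpa using this
  have key : ∀ x ∈ Icc x₀ b, ‖g x‖ ≤ M * (x - x₀) ^ 2 / 2 := by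
    intro x hx
    refine image_norm_le_of_norm_deriv_right_le_deriv_boundary (f := g)
      (f' := fun x => f' x - f' x₀) (B := fun t => M * (t - x₀) ^ 2 / 2)
      (B' := fun t => M * (t - x₀)) ?_ ?_ ?_ ?_ ?_ hx
    · exact fun x hx => ((hg' x hx).continuousAt).continuousWithinAt
    · exact fun x hx => ((hg' x (Ico_subset_Icc_self hx)).hasDerivWithinAt).mono
        (fun t ht => ht)
    · simp [hg]
    · intro t
      have : HasDerivAt (fun t : ℝ => M * (t - x₀) ^ 2 / 2)
          (M * (2 * (t - x₀) ^ 1 * 1) / 2) t := by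
        exact (((((hasDerivAt_id t).sub_const x₀).pow 2).const_mul M).div_const 2)
      simpa [mul_comm, mul_assoc, mul_div_assoc] using this
    · intro t ht
      have hmem : t ∈ Icc x₀ b := Ico_subset_Icc_self ht
      have hx₀ : x₀ ∈ Icc x₀ b := ⟨le_rfl, le_trans ht.1 (le_of_lt ht.2)⟩
      have := Convex.norm_image_sub_le_of_norm_hasDerivWithin_le
        (f := f') (f' := f'') (s := Icc x₀ b) (C := M)
        (fun x hx => (hd2 x hx).hasDerivWithinAt)
        (fun x hx => by simpa using hM x hx) (convex_Icc _ _) hx₀ hmem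
      calc ‖f' t - f' x₀‖ ≤ M * ‖t - x₀‖ := this
        _ = M * (t - x₀) := by rw [Real.norm_eq_abs, abs_of_nonneg (by linarith [ht.1])]
  intro x hx
  simpa [hg] using key x hx

theorem taylor_second_order_bound
    (f f' f'' : ℝ → ℝ) (x₀ h M : ℝ)
    (hd1 : ∀ x ∈ Icc (x₀ - h) (x₀ + h), HasDerivAt f (f' x) x)
    (hd2 : ∀ x ∈ Icc (x₀ - h) (x₀ + h), HasDerivAt f' (f'' x) x)
    (hM : ∀ t ∈ Icc (x₀ - h) (x₀ + h), |f'' t| ≤ M)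
    (hneg : f x₀ + |f' x₀| * h + M * h ^ 2 / 2 < 0) :
    ∀ x ∈ Icc (x₀ - h) (x₀ + h), f x < 0 := by
  intro x hx
  have hh : 0 ≤ h := by
    have := hx.1; have := hx.2; linarith
  have hx₀mem : x₀ ∈ Icc (x₀ - h) (x₀ + h) := by constructor <;> linarith
  have hMnn : 0 ≤ M := le_trans (abs_nonneg _) (hM x₀ hx₀mem)
  have habs : |x - x₀| ≤ h := by
    rw [abs_le]; exact ⟨by linarith [hx.1], by linarith [hx.2]⟩
  have key : |f x - f x₀ - f' x₀ * (x - x₀)| ≤ M * (x - x₀) ^ 2 / 2 := by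
    rcases le_total x₀ x with hle | hle
    · have hsub : Icc x₀ (x₀ + h) ⊆ Icc (x₀ - h) (x₀ + h) :=
        Icc_subset_Icc (by linarith) le_rfl
      exact taylor_helper f f' f'' x₀ (x₀ + h) M
        (fun y hy => hd1 y (hsub hy)) (fun y hy => hd2 y (hsub hy))
        (fun y hy => hM y (hsub hy)) x ⟨hle, hx.2⟩
    · -- reflect
      set F : ℝ → ℝ := fun t => f (2 * x₀ - t) with hF
      set F' : ℝ → ℝ := fun t => -(f' (2 * x₀ - t)) with hF'
      set F'' : ℝ → ℝ := fun t => f'' (2 * x₀ - t) with hF''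
      have hrefl : ∀ t ∈ Icc x₀ (x₀ + h), (2 * x₀ - t) ∈ Icc (x₀ - h) (x₀ + h) := by
        intro t ht; constructor
        · linarith [ht.2]
        · linarith [ht.1]
      have hinner : ∀ t : ℝ, HasDerivAt (fun t : ℝ => 2 * x₀ - t) (-1) t := by
        intro t
        simpa using ((hasDerivAt_id t).const_sub (2 * x₀))
      have hFd1 : ∀ t ∈ Icc x₀ (x₀ + h), HasDerivAt F (F' t) t := by
        intro t ht
        have := (hd1 _ (hrefl t ht)).comp t (hinner t)
        simpa [hF, hF', Function.comp_def] using this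
      have hFd2 : ∀ t ∈ Icc x₀ (x₀ + h), HasDerivAt F' (F'' t) t := by
        intro t ht
        have := ((hd2 _ (hrefl t ht)).comp t (hinner t)).neg
        simpa [hF', hF'', Function.comp_def, Pi.neg_def] using this
      have hFM : ∀ t ∈ Icc x₀ (x₀ + h), |F'' t| ≤ M := fun t ht => hM _ (hrefl t ht)
      have hy : (2 * x₀ - x) ∈ Icc x₀ (x₀ + h) := by
        constructor
        · linarith
        · linarith [hx.1]
      have := taylor_helper F F' F'' x₀ (x₀ + h) M hFd1 hFd2 hFM (2 * x₀ - x) hy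
      have e : F (2 * x₀ - x) = f x := by simp [hF]
      rw [e] at this
      have e2 : F x₀ = f x₀ := by simp [hF]; ring_nf
      rw [e2] at this
      have e3 : F' x₀ = -(f' x₀) := by simp [hF']; ring_nf
      rw [e3] at this
      calc |f x - f x₀ - f' x₀ * (x - x₀)|
          = |f x - f x₀ - -f' x₀ * (2 * x₀ - x - x₀)| := by ring_nf
        _ ≤ M * (2 * x₀ - x - x₀) ^ 2 / 2 := this
        _ = M * (x - x₀) ^ 2 / 2 := by ring
  have h1 := abs_le.mp key
  have h2 : f' x₀ * (x - x₀) ≤ |f' x₀| * h := by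
    calc f' x₀ * (x - x₀) ≤ |f' x₀ * (x - x₀)| := le_abs_self _
      _ = |f' x₀| * |x - x₀| := abs_mul _ _
      _ ≤ |f' x₀| * h := by gcongr
  have h3 : M * (x - x₀) ^ 2 / 2 ≤ M * h ^ 2 / 2 := by
    have : (x - x₀) ^ 2 ≤ h ^ 2 := by
      have := sq_abs (x - x₀)
      nlinarith [abs_nonneg (x - x₀)]
    nlinarith
  linarith [h1.2]
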